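/- Let α ∈ ℝ be badly approximable (there is c > 0 with |α − p/q| ≥ c/q² for all integers p, q with q ≠ 0). Let v₁ < v₂ < … be the strictly increasing enumeration of the set of odd positive integers v for which there exists an odd positive integer u with |vα − u| ≤ 2/v. Then there exists C ≥ 1 such that v_{n+1} ≤ C·v_n for all n. -/

import Mathlib

set_option maxHeartbeats 4000000 in
/-- Key construction: for badly approximable `α > 0` and any integer `w ≥ W₀`,
there is an odd positive `b` with `w < b ≤ (16/c²)·w` and an odd positive `u`
with `|bα - u| ≤ 2/b`. -/
lemma oddApprox_exists (α c : ℝ) (hc : 0 < c) (hc1 : c ≤ 1) (hα : 0 < α)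
    (hbad : ∀ p q : ℤ, q ≠ 0 → c / (q : ℝ) ^ 2 ≤ |α - (p : ℝ) / (q : ℝ)|)
    (W₀ : ℕ) (hW₀1 : 1 ≤ W₀) (hW₀α : 2 < α * (W₀ : ℝ) ^ 2)
    (w : ℤ) (hw : (W₀ : ℤ) ≤ w) :
    ∃ b : ℤ, w < b ∧ (b : ℝ) ≤ 16 / c ^ 2 * (w : ℝ) ∧ Odd b ∧ 0 < b ∧
      ∃ u : ℤ, Odd u ∧ 0 < u ∧ |(b : ℝ) * α - (u : ℝ)| ≤ 2 / (b : ℝ) := by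
  classical
  set γ : ℝ := (α + 1) / 2 with hγdef
  set c₂ : ℝ := c / 2 with hc₂def
  have hc₂ : 0 < c₂ := by positivity
  have hc₂1 : c₂ ≤ 1 / 2 := by rw [hc₂def]; linarith
  -- the distance-to-nearest-integer function for multiples of γ
  set g : ℕ → ℝ := fun q => |(q : ℝ) * γ - (round ((q : ℝ) * γ) : ℝ)| with hgdef
  have gmin : ∀ (q : ℕ) (p : ℤ), g q ≤ |(q : ℝ) * γ - (p : ℝ)| := by
    intro q p
    exact round_le ((q : ℝ) * γ) p
  -- badly approximable lower bound for γ
  have hγbound : ∀ (q : ℕ), 1 ≤ q → ∀ p : ℤ, c₂ / (q : ℝ) ≤ |(q : ℝ) * γ - (p : ℝ)| := by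
    intro q hq p
    have hq0 : (0 : ℝ) < (q : ℝ) := by exact_mod_cast hq
    have hqz : ((q : ℤ) : ℝ) ≠ 0 := by push_cast; exact hq0.ne'
    have hb := hbad (2 * p - (q : ℤ)) (q : ℤ) (by exact_mod_cast hq0.ne')
    have key : (q : ℝ) * γ - (p : ℝ) = ((q : ℝ) / 2) * (α - ((2 * p - (q : ℤ) : ℤ) : ℝ) / ((q : ℤ) : ℝ)) := by
      push_cast
      field_simp [hγdef]
      ring
    rw [key, abs_mul, abs_of_pos (by positivity : (0:ℝ) < (q:ℝ)/2)]
    have h1 : c₂ / (q : ℝ) = ((q : ℝ) / 2) * (c / ((q : ℤ) : ℝ) ^ 2) := by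
      push_cast
      field_simp [hc₂def]
      ring
    rw [h1]
    apply mul_le_mul_of_nonneg_left hb (by positivity)
  have glb : ∀ (q : ℕ), 1 ≤ q → c₂ / (q : ℝ) ≤ g q := fun q hq => hγbound q hq _
  -- Dirichlet wrapper
  have dirichlet : ∀ N : ℕ, 0 < N → ∃ k : ℕ, 1 ≤ k ∧ k ≤ N ∧ g k ≤ 1 / ((N : ℝ) + 1) := by
    intro N hN
    obtain ⟨j, k, hk0, hkN, h⟩ := Real.exists_int_int_abs_mul_sub_le γ hN
    refine ⟨k.toNat, by omega, by omega, ?_⟩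
    have hcast : ((k.toNat : ℕ) : ℝ) = (k : ℝ) := by
      exact_mod_cast congrArg (Int.cast : ℤ → ℝ) (Int.toNat_of_nonneg hk0.le)
    calc g k.toNat ≤ |((k.toNat : ℕ) : ℝ) * γ - (j : ℝ)| := gmin _ j
      _ = |(k : ℝ) * γ - (j : ℝ)| := by rw [hcast]
      _ ≤ 1 / ((N : ℝ) + 1) := h
  -- basic facts about w
  have hw1 : (1 : ℤ) ≤ w := le_trans (by exact_mod_cast hW₀1) hw
  have hw0 : (0 : ℝ) < (w : ℝ) := by exact_mod_cast hw1
  have hwR : (1 : ℝ) ≤ (w : ℝ) := by exact_mod_cast hw1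
  -- first denominator b₁ : least q ≥ 1 with g q < c₂ / w
  have hQex : ∃ q : ℕ, 1 ≤ q ∧ g q < c₂ / (w : ℝ) := by
    set N : ℕ := ⌈(w : ℝ) / c₂⌉₊ with hNdef
    have hN0 : 0 < N := Nat.ceil_pos.mpr (div_pos hw0 hc₂)
    obtain ⟨k, hk1, hkN, hkg⟩ := dirichlet N hN0
    refine ⟨k, hk1, lt_of_le_of_lt hkg ?_⟩
    rw [div_lt_div_iff₀ (by positivity) hw0]
    have h1 : (w : ℝ) / c₂ ≤ (N : ℝ) := Nat.le_ceil _
    rw [div_le_iff₀ hc₂] at h1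
    nlinarith
  set b₁ : ℕ := Nat.find hQex with hb₁def
  obtain ⟨hb₁1, hb₁g⟩ := Nat.find_spec hQex
  have hb₁min : ∀ q : ℕ, 1 ≤ q → q < b₁ → c₂ / (w : ℝ) ≤ g q := by
    intro q h1 hlt
    by_contra h
    push_neg at h
    exact Nat.find_min hQex hlt ⟨h1, h⟩
  have hb₁pos : (0 : ℝ) < (b₁ : ℝ) := by exact_mod_cast hb₁1
  have hgb₁lb : c₂ / (b₁ : ℝ) ≤ g b₁ := glb b₁ hb₁1
  have hgb₁pos : 0 < g b₁ := lt_of_lt_of_le (div_pos hc₂ hb₁pos) hgb₁lb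
  have hwb₁ : (w : ℝ) < (b₁ : ℝ) := by
    have h := lt_of_le_of_lt hgb₁lb hb₁g
    rw [div_lt_div_iff₀ hb₁pos hw0] at h
    nlinarith
  -- upper bound on b₁
  have hb₁ub : (b₁ : ℝ) ≤ 2 * (w : ℝ) / c₂ := by
    have hk : b₁ ≤ ⌈(w : ℝ) / c₂⌉₊ := by
      have hN0 : 0 < ⌈(w : ℝ) / c₂⌉₊ := Nat.ceil_pos.mpr (div_pos hw0 hc₂)
      obtain ⟨k, hk1, hkN, hkg⟩ := dirichlet _ hN0
      have hkprop : 1 ≤ k ∧ g k < c₂ / (w : ℝ) := by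
        refine ⟨hk1, lt_of_le_of_lt hkg ?_⟩
        rw [div_lt_div_iff₀ (by positivity) hw0]
        have h1 : (w : ℝ) / c₂ ≤ (⌈(w : ℝ) / c₂⌉₊ : ℝ) := Nat.le_ceil _
        rw [div_le_iff₀ hc₂] at h1
        nlinarith
      exact le_trans (Nat.find_le hkprop) hkN
    have h2 : ((⌈(w : ℝ) / c₂⌉₊ : ℕ) : ℝ) < (w : ℝ) / c₂ + 1 :=
      Nat.ceil_lt_add_one (by positivity)
    have h3 : (1 : ℝ) ≤ (w : ℝ) / c₂ := by
      rw [le_div_iff₀ hc₂]; nlinarith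
    have h4 : (b₁ : ℝ) ≤ ((⌈(w : ℝ) / c₂⌉₊ : ℕ) : ℝ) := by exact_mod_cast hk
    have h5 : 2 * (w : ℝ) / c₂ = 2 * ((w : ℝ) / c₂) := by ring
    rw [h5]
    linarith
  -- second denominator b₂ : least q > b₁ with g q < g b₁
  have hRex : ∃ q : ℕ, b₁ < q ∧ g q < g b₁ := by
    set N₂ : ℕ := ⌈1 / g b₁⌉₊ with hN₂def
    have hN₂0 : 0 < N₂ := Nat.ceil_pos.mpr (by positivity)
    obtain ⟨k, hk1, hkN, hkg⟩ := dirichlet N₂ hN₂0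
    have hgk : g k < g b₁ := by
      refine lt_of_le_of_lt hkg ?_
      rw [div_lt_iff₀ (by positivity)]
      have h1 : 1 / g b₁ ≤ (N₂ : ℝ) := Nat.le_ceil _
      rw [div_le_iff₀ hgb₁pos] at h1
      nlinarith
    refine ⟨k, ?_, hgk⟩
    rcases lt_trichotomy k b₁ with h | h | h
    · exfalso
      have := hb₁min k hk1 h
      linarith
    · exfalso; rw [h] at hgk; linarith
    · exact h
  set b₂ : ℕ := Nat.find hRex with hb₂def
  obtain ⟨hb₂gt, hb₂g⟩ := Nat.find_spec hRex
  have hb₂min : ∀ q : ℕ, b₁ < q → q < b₂ → g b₁ ≤ g q := by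
    intro q h1 hlt
    by_contra h
    push_neg at h
    exact Nat.find_min hRex hlt ⟨h1, h⟩
  have hb₂1 : 1 ≤ b₂ := le_trans hb₁1 hb₂gt.le
  have hb₂pos : (0 : ℝ) < (b₂ : ℝ) := by exact_mod_cast hb₂1
  have hb₁ltb₂ : (b₁ : ℝ) < (b₂ : ℝ) := by exact_mod_cast hb₂gt
  -- approximation quality : g b₁ ≤ 1 / b₂
  have hgb₁b₂ : g b₁ ≤ 1 / (b₂ : ℝ) := by
    have hb₂m1 : 0 < b₂ - 1 := by omega
    obtain ⟨q, hq1, hqle, hqg⟩ := dirichlet (b₂ - 1) hb₂m1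
    have hcast : ((b₂ - 1 : ℕ) : ℝ) + 1 = (b₂ : ℝ) := by
      push_cast [Nat.cast_sub hb₂1]
      ring
    rw [hcast] at hqg
    rcases lt_trichotomy q b₁ with h | h | h
    · have h2 := hb₁min q hq1 h
      linarith
    · rw [← h]; exact hqg
    · have hqb₂ : q < b₂ := by omega
      exact le_trans (hb₂min q h hqb₂) hqg
  have hgb₂ub : g b₂ ≤ 1 / (b₂ : ℝ) := le_trans hb₂g.le hgb₁b₂
  -- upper bound on b₂
  have hb₂ub : (b₂ : ℝ) ≤ 2 * (b₁ : ℝ) / c₂ := by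
    have hN₂0 : 0 < ⌈1 / g b₁⌉₊ := Nat.ceil_pos.mpr (by positivity)
    obtain ⟨k, hk1, hkN, hkg⟩ := dirichlet _ hN₂0
    have hgk : g k < g b₁ := by
      refine lt_of_le_of_lt hkg ?_
      rw [div_lt_iff₀ (by positivity)]
      have h1 : 1 / g b₁ ≤ (⌈1 / g b₁⌉₊ : ℝ) := Nat.le_ceil _
      rw [div_le_iff₀ hgb₁pos] at h1
      nlinarith
    have hkb₁ : b₁ < k := by
      rcases lt_trichotomy k b₁ with h | h | h
      · exfalso; have := hb₁min k hk1 h; linarith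
      · exfalso; rw [h] at hgk; linarith
      · exact h
    have hb₂k : b₂ ≤ k := Nat.find_le ⟨hkb₁, hgk⟩
    have h2 : ((⌈1 / g b₁⌉₊ : ℕ) : ℝ) < 1 / g b₁ + 1 := Nat.ceil_lt_add_one (by positivity)
    have h3 : 1 / g b₁ ≤ (b₁ : ℝ) / c₂ := by
      rw [div_le_div_iff₀ hgb₁pos hc₂]
      rw [div_le_iff₀ hb₁pos] at hgb₁lb
      nlinarith
    have h4 : (1 : ℝ) ≤ 1 / g b₁ := by
      rw [le_div_iff₀ hgb₁pos]
      have := hb₁g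
      have h5 : c₂ / (w : ℝ) ≤ c₂ := by
        rw [div_le_iff₀ hw0]; nlinarith
      linarith
    have h6 : (b₂ : ℝ) ≤ ((⌈1 / g b₁⌉₊ : ℕ) : ℝ) := by
      exact_mod_cast le_trans hb₂k hkN
    have h7 : 2 * (b₁ : ℝ) / c₂ = 2 * ((b₁ : ℝ) / c₂) := by ring
    rw [h7]
    linarith
  -- determinant argument : b₁ or b₂ is odd
  set p₁ : ℤ := round ((b₁ : ℝ) * γ) with hp₁def
  set p₂ : ℤ := round ((b₂ : ℝ) * γ) with hp₂def
  set D : ℤ := p₁ * (b₂ : ℤ) - p₂ * (b₁ : ℤ) with hDdef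
  have hDreal : (D : ℝ) = (b₂ : ℝ) * ((p₁ : ℝ) - (b₁ : ℝ) * γ) - (b₁ : ℝ) * ((p₂ : ℝ) - (b₂ : ℝ) * γ) := by
    rw [hDdef]
    push_cast
    ring
  have hg1 : |(p₁ : ℝ) - (b₁ : ℝ) * γ| = g b₁ := by rw [abs_sub_comm]
  have hg2 : |(p₂ : ℝ) - (b₂ : ℝ) * γ| = g b₂ := by rw [abs_sub_comm]
  have hDabs : |(D : ℝ)| < 2 := by
    rw [hDreal]
    calc |(b₂ : ℝ) * ((p₁ : ℝ) - (b₁ : ℝ) * γ) - (b₁ : ℝ) * ((p₂ : ℝ) - (b₂ : ℝ) * γ)|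
        ≤ |(b₂ : ℝ) * ((p₁ : ℝ) - (b₁ : ℝ) * γ)| + |(b₁ : ℝ) * ((p₂ : ℝ) - (b₂ : ℝ) * γ)| :=
          abs_sub _ _
      _ = (b₂ : ℝ) * g b₁ + (b₁ : ℝ) * g b₂ := by
          rw [abs_mul, abs_mul, hg1, hg2, abs_of_pos hb₂pos, abs_of_pos hb₁pos]
      _ < 2 := by
          have h1 : (b₂ : ℝ) * g b₁ ≤ 1 := by
            have h0 := mul_le_mul_of_nonneg_left hgb₁b₂ hb₂pos.le
            rwa [mul_one_div, div_self hb₂pos.ne'] at h0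
          have h2 : (b₁ : ℝ) * g b₂ < 1 := by
            have : (b₁ : ℝ) * g b₂ < (b₁ : ℝ) * g b₁ := by
              apply mul_lt_mul_of_pos_left hb₂g hb₁pos
            have h3 : (b₁ : ℝ) * g b₁ ≤ (b₁ : ℝ) / (b₂ : ℝ) := by
              rw [div_eq_mul_one_div]
              exact mul_le_mul_of_nonneg_left hgb₁b₂ hb₁pos.le
            have h4 : (b₁ : ℝ) / (b₂ : ℝ) < 1 := by
              rw [div_lt_one hb₂pos]; exact hb₁ltb₂
            linarith
          linarith
  have hDne : D ≠ 0 := by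
    intro h0
    rw [h0] at hDreal
    simp only [Int.cast_zero] at hDreal
    have heq : (b₂ : ℝ) * ((p₁ : ℝ) - (b₁ : ℝ) * γ) = (b₁ : ℝ) * ((p₂ : ℝ) - (b₂ : ℝ) * γ) := by
      linarith
    have habs : (b₂ : ℝ) * g b₁ = (b₁ : ℝ) * g b₂ := by
      have h5 := congrArg abs heq
      rwa [abs_mul, abs_mul, hg1, hg2, abs_of_pos hb₂pos, abs_of_pos hb₁pos] at h5
    nlinarith [hb₂g, hgb₁pos, hb₁pos, hb₂pos, hb₁ltb₂]
  have hDodd : Odd D := by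
    have h2 : |D| < 2 := by exact_mod_cast (by push_cast; exact hDabs : |(D:ℝ)| < (2:ℝ))
    rcases abs_lt.mp h2 with ⟨ha, hb⟩
    interval_cases D
    · exact ⟨-1, by ring⟩
    · exact absurd rfl hDne
    · exact ⟨0, by ring⟩
  have hparity : Odd b₁ ∨ Odd b₂ := by
    by_contra h
    push_neg at h
    obtain ⟨h1, h2⟩ := h
    rw [Nat.not_odd_iff_even] at h1 h2
    have he1 : Even ((b₁ : ℤ) : ℤ) := (Int.even_coe_nat b₁).mpr h1
    have he2 : Even ((b₂ : ℤ) : ℤ) := (Int.even_coe_nat b₂).mpr h2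
    have hED : Even D := by
      rw [hDdef]
      exact (he2.mul_left p₁).sub (he1.mul_left p₂)
    exact (Int.not_odd_iff_even.mpr hED) hDodd
  -- choose the odd one of b₁, b₂ as the denominator
  obtain ⟨b, hbodd, hb1le, hwb, hbub, hgb⟩ :
      ∃ b : ℕ, Odd b ∧ 1 ≤ b ∧ (w : ℝ) < (b : ℝ) ∧ (b : ℝ) ≤ (b₂ : ℝ) ∧ g b ≤ 1 / (b : ℝ) := by
    rcases hparity with h | h
    · exact ⟨b₁, h, hb₁1, hwb₁, hb₁ltb₂.le,
        le_trans hgb₁b₂ (by apply one_div_le_one_div_of_le hb₁pos hb₁ltb₂.le)⟩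
    · exact ⟨b₂, h, hb₂1, lt_trans hwb₁ hb₁ltb₂, le_refl _, hgb₂ub⟩
  have hbpos : (0 : ℝ) < (b : ℝ) := by exact_mod_cast hb1le
  -- final bound : b ≤ 16/c² * w
  have hbound : (b : ℝ) ≤ 16 / c ^ 2 * (w : ℝ) := by
    have h1 : (b : ℝ) ≤ 2 * (2 * (w : ℝ) / c₂) / c₂ := by
      calc (b : ℝ) ≤ (b₂ : ℝ) := hbub
        _ ≤ 2 * (b₁ : ℝ) / c₂ := hb₂ub
        _ ≤ 2 * (2 * (w : ℝ) / c₂) / c₂ := by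
            gcongr
    have h2 : 2 * (2 * (w : ℝ) / c₂) / c₂ = 16 / c ^ 2 * (w : ℝ) := by
      rw [hc₂def]
      field_simp
      ring
    linarith [h2 ▸ h1]
  -- construct u
  set m : ℤ := round ((b : ℝ) * γ) with hmdef
  set u : ℤ := 2 * m - (b : ℤ) with hudef
  have hval : (b : ℝ) * α - (u : ℝ) = 2 * ((b : ℝ) * γ - (m : ℝ)) := by
    rw [hudef, hγdef]
    push_cast
    ring
  have happrox : |(b : ℝ) * α - (u : ℝ)| ≤ 2 / (b : ℝ) := by
    rw [hval, abs_mul, abs_of_pos (by norm_num : (0:ℝ) < 2)]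
    rw [div_eq_mul_one_div]
    exact mul_le_mul_of_nonneg_left hgb (by norm_num)
  have huodd : Odd u := by
    rw [hudef]
    have : Odd ((b : ℤ)) := by exact_mod_cast hbodd
    exact (Even.sub_odd (even_two_mul m) this)
  have hbW : (W₀ : ℝ) ≤ (b : ℝ) := by
    have : (W₀ : ℝ) ≤ (w : ℝ) := by exact_mod_cast hw
    linarith
  have hb2α : 2 < α * (b : ℝ) ^ 2 := by
    have hW0pos : (0 : ℝ) < (W₀ : ℝ) := by exact_mod_cast hW₀1
    have hbb : (W₀ : ℝ) ^ 2 ≤ (b : ℝ) ^ 2 := by nlinarith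
    nlinarith [mul_le_mul_of_nonneg_left hbb hα.le]
  have hupos : 0 < u := by
    have h1 : |(b : ℝ) * γ - (m : ℝ)| ≤ 1 / (b : ℝ) := hgb
    have h2 : (u : ℝ) = (b : ℝ) * α - 2 * ((b : ℝ) * γ - (m : ℝ)) := by linarith [hval]
    have h3 : (0 : ℝ) < (u : ℝ) := by
      rcases abs_le.mp h1 with ⟨hl, hr⟩
      rw [h2]
      have : 2 / (b : ℝ) < (b : ℝ) * α := by
        rw [div_lt_iff₀ hbpos]
        nlinarith
      have h4 : 2 * ((b : ℝ) * γ - (m : ℝ)) ≤ 2 / (b : ℝ) := by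
        rw [div_eq_mul_one_div]
        linarith
      linarith
    exact_mod_cast h3
  refine ⟨(b : ℤ), by exact_mod_cast hwb, by exact_mod_cast hbound, by exact_mod_cast hbodd,
    by exact_mod_cast hb1le, u, huodd, hupos, ?_⟩
  push_cast
  exact happrox

set_option maxHeartbeats 1000000 in
/-- For badly approximable `α`, the strictly increasing enumeration `v n` of the odd
positive integers `v` admitting an odd positive `u` with `|vα - u| ≤ 2/v` has bounded
ratios: `v (n+1) ≤ C * v n` for some `C ≥ 1`. -/
theorem oddOdd_denominators_bounded_gaps (α : ℝ)
    (hbad : ∃ c : ℝ, 0 < c ∧ ∀ p q : ℤ, q ≠ 0 → c / (q : ℝ) ^ 2 ≤ |α - (p : ℝ) / (q : ℝ)|)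
    (v : ℕ → ℤ) (hmono : StrictMono v)
    (hrange : Set.range v = {w : ℤ | Odd w ∧ 0 < w ∧
      ∃ u : ℤ, Odd u ∧ 0 < u ∧ |(w : ℝ) * α - (u : ℝ)| ≤ 2 / (w : ℝ)}) :
    ∃ C : ℝ, 1 ≤ C ∧ ∀ n : ℕ, (v (n + 1) : ℝ) ≤ C * (v n : ℝ) := by
  obtain ⟨c, hc, hbad⟩ := hbad
  set c₁ : ℝ := min c 1 with hc₁def
  have hc₁ : 0 < c₁ := lt_min hc one_pos
  have hc₁1 : c₁ ≤ 1 := min_le_right _ _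
  have hbad₁ : ∀ p q : ℤ, q ≠ 0 → c₁ / (q : ℝ) ^ 2 ≤ |α - (p : ℝ) / (q : ℝ)| := by
    intro p q hq
    refine le_trans ?_ (hbad p q hq)
    have hq2 : (0 : ℝ) < (q : ℝ) ^ 2 := by
      have : (q : ℝ) ≠ 0 := by exact_mod_cast hq
      positivity
    exact div_le_div_of_nonneg_right (min_le_left _ _) hq2.le
  have hmem : ∀ n : ℕ, Odd (v n) ∧ 0 < v n ∧
      ∃ u : ℤ, Odd u ∧ 0 < u ∧ |(v n : ℝ) * α - (u : ℝ)| ≤ 2 / (v n : ℝ) := by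
    intro n
    have h : v n ∈ Set.range v := Set.mem_range_self n
    rw [hrange] at h
    exact h
  -- lower bound v n ≥ n + 1
  have hvn : ∀ n : ℕ, (n : ℤ) + 1 ≤ v n := by
    intro n
    induction n with
    | zero => have := (hmem 0).2.1; omega
    | succ n ih =>
      have h : v n < v (n + 1) := hmono (by omega)
      push_cast
      omega
  -- α is positive
  have hα : 0 < α := by
    obtain ⟨hodd, hpos, u, huodd, hupos, happ⟩ := hmem 3
    have h4 : (4 : ℤ) ≤ v 3 := by have := hvn 3; omega
    have h4' : (4 : ℝ) ≤ (v 3 : ℝ) := by exact_mod_cast h4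
    have hw0 : (0 : ℝ) < (v 3 : ℝ) := by linarith
    have hu1 : (1 : ℝ) ≤ (u : ℝ) := by exact_mod_cast hupos
    have h2w : 2 / (v 3 : ℝ) ≤ 1 / 2 := by
      rw [div_le_div_iff₀ hw0 (by norm_num : (0:ℝ) < 2)]
      linarith
    have hl := (abs_le.mp happ).1
    have hwa : (1 : ℝ) / 2 ≤ (v 3 : ℝ) * α := by linarith
    by_contra h
    push_neg at h
    nlinarith [mul_nonneg hw0.le (neg_nonneg.mpr h)]
  -- choose W₀
  obtain ⟨W₀, hW₀⟩ := exists_nat_gt (2 / α + 1)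
  have h2α : (0 : ℝ) ≤ 2 / α := by positivity
  have hW₀1 : 1 ≤ W₀ := by
    by_contra h
    push_neg at h
    interval_cases W₀
    · simp at hW₀; linarith
  have hW₀R : (1 : ℝ) ≤ (W₀ : ℝ) := by exact_mod_cast hW₀1
  have hW₀α : 2 < α * (W₀ : ℝ) ^ 2 := by
    have h1 : 2 / α < (W₀ : ℝ) := by linarith
    rw [div_lt_iff₀ hα] at h1
    nlinarith
  -- final constant
  refine ⟨max (16 / c₁ ^ 2) ((v W₀ : ℝ)), ?_, ?_⟩
  · refine le_trans ?_ (le_max_left _ _)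
    rw [le_div_iff₀ (by positivity)]
    nlinarith
  · intro n
    have hvnpos : (1 : ℤ) ≤ v n := (hmem n).2.1
    have hvnposR : (1 : ℝ) ≤ (v n : ℝ) := by exact_mod_cast hvnpos
    by_cases hcase : (W₀ : ℤ) ≤ v n
    · obtain ⟨b, hb1, hb2, hbrest⟩ :=
        oddApprox_exists α c₁ hc₁ hc₁1 hα hbad₁ W₀ hW₀1 hW₀α (v n) hcase
      have hbmem : b ∈ Set.range v := by
        rw [hrange]
        exact hbrest
      obtain ⟨m, hm⟩ := hbmem
      have hnm : n < m := by
        have : v n < v m := by rw [hm]; exact hb1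
        exact hmono.lt_iff_lt.mp this
      have h1 : v (n + 1) ≤ v m := hmono.monotone (by omega)
      calc (v (n + 1) : ℝ) ≤ (v m : ℝ) := by exact_mod_cast h1
        _ = (b : ℝ) := by rw [hm]
        _ ≤ 16 / c₁ ^ 2 * (v n : ℝ) := hb2
        _ ≤ max (16 / c₁ ^ 2) ((v W₀ : ℝ)) * (v n : ℝ) := by
            apply mul_le_mul_of_nonneg_right (le_max_left _ _) (by linarith)
    · push_neg at hcase
      have hn1 : n + 1 ≤ W₀ := by
        have := hvn n
        omega
      have h1 : v (n + 1) ≤ v W₀ := hmono.monotone hn1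
      have h2 : (v (n + 1) : ℝ) ≤ (v W₀ : ℝ) := by exact_mod_cast h1
      have h3 : (0 : ℝ) ≤ max (16 / c₁ ^ 2) ((v W₀ : ℝ)) := by
        refine le_trans ?_ (le_max_left _ _)
        positivity
      calc (v (n + 1) : ℝ) ≤ (v W₀ : ℝ) := h2
        _ ≤ max (16 / c₁ ^ 2) ((v W₀ : ℝ)) := le_max_right _ _
        _ = max (16 / c₁ ^ 2) ((v W₀ : ℝ)) * 1 := by ring
        _ ≤ max (16 / c₁ ^ 2) ((v W₀ : ℝ)) * (v n : ℝ) :=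
            mul_le_mul_of_nonneg_left hvnposR h3
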